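/- (Strong completeness) The system LFD is strongly complete: for every set Ψ of LFD formulas and every LFD formula φ, if every admissible assignment of every dependence model that satisfies all formulas of Ψ also satisfies φ, then φ is provable from Ψ, i.e., there is a finite subset Ψ₀ ⊆ Ψ such that the implication ⋀Ψ₀ → φ is provable in the Hilbert system LFD. -/

import Mathlib

namespace LFD

/-- LFD formulas over variables `V` and a relational vocabulary `Pred` with arity map `ar`:
atoms `P x₁…x_n`, negation, conjunction, dependence modalities `𝔻_X φ`,
and dependence atoms `D_X y` (with `X ⊆ V` finite). -/
inductive Formula (V Pred : Type) (ar : Pred → ℕ) : Type where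
  | atom (P : Pred) (x : Fin (ar P) → V)
  | neg (φ : Formula V Pred ar)
  | conj (φ ψ : Formula V Pred ar)
  | dd (X : Finset V) (φ : Formula V Pred ar)
  | dep (X : Finset V) (y : V)

variable {V Pred O : Type} {ar : Pred → ℕ}

/-- The free variables of an LFD formula. -/
def Free [DecidableEq V] : Formula V Pred ar → Finset V
  | .atom _ x => Finset.univ.image x
  | .neg φ => Free φ
  | .conj φ ψ => Free φ ∪ Free ψ
  | .dd X _ => X
  | .dep X _ => X

/-- A dependence model: an interpretation `I` of each predicate symbol as a set of
tuples of objects, together with a set `A` of admissible assignments. -/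
structure DepModel (V Pred : Type) (ar : Pred → ℕ) (O : Type) where
  I : (P : Pred) → Set (Fin (ar P) → O)
  A : Set (V → O)

/-- `s =_X t` : the assignments `s` and `t` agree on all variables in `X`. -/
def agree (X : Set V) (s t : V → O) : Prop := ∀ x ∈ X, s x = t x

/-- Truth of an LFD formula at an assignment in a dependence model. -/
def Sat (M : DepModel V Pred ar O) : Formula V Pred ar → (V → O) → Prop
  | .atom P x, s => (fun i => s (x i)) ∈ M.I P
  | .neg φ, s => ¬ Sat M φ s
  | .conj φ ψ, s => Sat M φ s ∧ Sat M ψ s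
  | .dd X φ, s => ∀ t ∈ M.A, agree (↑X) s t → Sat M φ t
  | .dep X y, s => ∀ t ∈ M.A, agree (↑X) s t → s y = t y

end LFD

namespace LFD

variable {V Pred : Type} {ar : Pred → ℕ}

/-- Material implication `φ → ψ`, defined classically as `¬(φ ∧ ¬ψ)`. -/
def impl (φ ψ : Formula V Pred ar) : Formula V Pred ar :=
  Formula.neg (Formula.conj φ (Formula.neg ψ))

/-- The conjunction `D_X Y ∧ θ`, i.e. the premises `D_X y` (for `y ∈ Y`) conjoined in
front of `θ` (just `θ` if `Y = ∅`); `D_X Y` abbreviates the conjunction of the atoms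
`D_X y` for `y ∈ Y`. -/
noncomputable def depPrem (X Y : Finset V) (θ : Formula V Pred ar) : Formula V Pred ar :=
  (Y.toList.map (fun y => Formula.dep X y)).foldr Formula.conj θ

/-- The Hilbert proof system **LFD**: classical propositional logic (all substitution
instances of propositional tautologies, plus modus ponens), 𝔻-Necessitation,
𝔻-Distribution, 𝔻-Introduction (for `Free(φ) ⊆ X`), 𝔻-Elimination, Projection,
Transitivity `(D_X Y ∧ D_Y Z) → D_X Z` (stated for each `z ∈ Z`), and Transfer
`(D_X Y ∧ 𝔻_Y φ) → 𝔻_X φ`. -/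
inductive Provable [DecidableEq V] : Formula V Pred ar → Prop where
  /-- all substitution instances of classical propositional tautologies -/
  | taut (φ : Formula V Pred ar)
      (h : ∀ v : Formula V Pred ar → Bool,
        (∀ ψ, v (Formula.neg ψ) = !(v ψ)) →
        (∀ ψ χ, v (Formula.conj ψ χ) = (v ψ && v χ)) → v φ = true) :
      Provable φ
  /-- modus ponens -/
  | mp {φ ψ : Formula V Pred ar} : Provable (impl φ ψ) → Provable φ → Provable ψ
  /-- 𝔻-Necessitation -/
  | nec (X : Finset V) {φ : Formula V Pred ar} : Provable φ → Provable (Formula.dd X φ)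
  /-- 𝔻-Distribution -/
  | distr (X : Finset V) (φ ψ : Formula V Pred ar) :
      Provable (impl (Formula.dd X (impl φ ψ))
        (impl (Formula.dd X φ) (Formula.dd X ψ)))
  /-- 𝔻-Introduction, provided `Free(φ) ⊆ X` -/
  | intro (X : Finset V) (φ : Formula V Pred ar) (h : Free φ ⊆ X) :
      Provable (impl φ (Formula.dd X φ))
  /-- 𝔻-Elimination -/
  | elim (X : Finset V) (φ : Formula V Pred ar) : Provable (impl (Formula.dd X φ) φ)
  /-- Projection: `D_X x` for `x ∈ X` -/
  | proj (X : Finset V) (x : V) (h : x ∈ X) : Provable (Formula.dep X x)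
  /-- Transitivity: `(D_X Y ∧ D_Y z) → D_X z` -/
  | trans (X Y : Finset V) (z : V) :
      Provable (impl (depPrem X Y (Formula.dep Y z)) (Formula.dep X z))
  /-- Transfer: `(D_X Y ∧ 𝔻_Y φ) → 𝔻_X φ` -/
  | transfer (X Y : Finset V) (φ : Formula V Pred ar) :
      Provable (impl (depPrem X Y (Formula.dd Y φ)) (Formula.dd X φ))

end LFD

namespace LFD

variable {V Pred : Type} [DecidableEq V] {ar : Pred → ℕ}

local notation "F" => Formula V Pred ar

open Formula

/-- helper: a taut certificate tactic pattern -/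
theorem pid (A : F) : Provable (impl A A) :=
  Provable.taut _ (by intro v hn hc; simp only [impl, hn, hc]; cases v A <;> rfl)

theorem p1 (A B : F) : Provable (impl A (impl B A)) :=
  Provable.taut _ (by intro v hn hc; simp only [impl, hn, hc]; cases v A <;> cases v B <;> rfl)

/-- S axiom -/
theorem p2 (A B C : F) :
    Provable (impl (impl C (impl A B)) (impl (impl C A) (impl C B))) :=
  Provable.taut _ (by
    intro v hn hc; simp only [impl, hn, hc]
    cases v A <;> cases v B <;> cases v C <;> rfl)

/-- B combinator rule : from ⊢A→B infer ⊢(C→A)→(C→B) -/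
theorem brule {A B : F} (h : Provable (impl A B)) (C : F) :
    Provable (impl (impl C A) (impl C B)) :=
  Provable.mp (Provable.taut (impl (impl A B) (impl (impl C A) (impl C B))) (by
    intro v hn hc; simp only [impl, hn, hc]
    cases v A <;> cases v B <;> cases v C <;> rfl)) h

/-- syllogism rule -/
theorem syl {A B C : F} (h1 : Provable (impl A B)) (h2 : Provable (impl B C)) :
    Provable (impl A C) :=
  Provable.mp (Provable.mp (Provable.taut
    (impl (impl A B) (impl (impl B C) (impl A C))) (by
      intro v hn hc; simp only [impl, hn, hc]
      cases v A <;> cases v B <;> cases v C <;> rfl)) h1) h2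

theorem conj_elim_l (A B : F) : Provable (impl (conj A B) A) :=
  Provable.taut _ (by intro v hn hc; simp only [impl, hn, hc]; cases v A <;> cases v B <;> rfl)

theorem conj_elim_r (A B : F) : Provable (impl (conj A B) B) :=
  Provable.taut _ (by intro v hn hc; simp only [impl, hn, hc]; cases v A <;> cases v B <;> rfl)

theorem conj_intro (A B : F) : Provable (impl A (impl B (conj A B))) :=
  Provable.taut _ (by intro v hn hc; simp only [impl, hn, hc]; cases v A <;> cases v B <;> rfl)

theorem efq (A B : F) : Provable (impl A (impl (neg A) B)) :=
  Provable.taut _ (by intro v hn hc; simp only [impl, hn, hc]; cases v A <;> cases v B <;> rfl)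

theorem clavius (A : F) : Provable (impl (impl (neg A) A) A) :=
  Provable.taut _ (by intro v hn hc; simp only [impl, hn, hc]; cases v A <;> rfl)

theorem caseSplit (A C : F) : Provable (impl (impl A C) (impl (impl (neg A) C) C)) :=
  Provable.taut _ (by intro v hn hc; simp only [impl, hn, hc]; cases v A <;> cases v C <;> rfl)

theorem contrapose {A B : F} (h : Provable (impl A B)) : Provable (impl (neg B) (neg A)) :=
  Provable.mp (Provable.taut (impl (impl A B) (impl (neg B) (neg A))) (by
    intro v hn hc; simp only [impl, hn, hc]
    cases v A <;> cases v B <;> rfl)) h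

/-- weakening under a list of hypotheses -/
theorem imp_intro {A : F} (h : Provable A) : ∀ l : List F, Provable (l.foldr impl A)
  | [] => h
  | a :: l => Provable.mp (p1 _ a) (imp_intro h l)

theorem pS2 (P Q R a : F) :
    Provable (impl (impl P (impl Q R)) (impl (impl a P) (impl (impl a Q) (impl a R)))) :=
  Provable.taut _ (by
    intro v hn hc; simp only [impl, hn, hc]
    cases v P <;> cases v Q <;> cases v R <;> cases v a <;> rfl)

/-- `⊢ fold l (A→B) → (fold l A → fold l B)` -/
theorem foldr_s : ∀ (l : List F) (A B : F),
    Provable (impl (l.foldr impl (impl A B)) (impl (l.foldr impl A) (l.foldr impl B)))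
  | [], A, B => pid _
  | a :: l, A, B => Provable.mp (pS2 _ _ _ a) (foldr_s l A B)

/-- mp under a list of hypotheses -/
theorem foldr_mp (l : List F) {A B : F} (h1 : Provable (l.foldr impl (impl A B)))
    (h2 : Provable (l.foldr impl A)) : Provable (l.foldr impl B) :=
  Provable.mp (Provable.mp (foldr_s l A B) h1) h2

/-- monotonicity under a list of hypotheses -/
theorem imp_mono {A B : F} (h : Provable (impl A B)) :
    ∀ l : List F, Provable (impl (l.foldr impl A) (l.foldr impl B))
  | [] => h
  | a :: l => brule (imp_mono h l) a

theorem foldr_of_imp {A B : F} (h : Provable (impl A B)) (l : List F)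
    (h2 : Provable (l.foldr impl A)) : Provable (l.foldr impl B) :=
  Provable.mp (imp_mono h l) h2

theorem pLift (E C D a : F) :
    Provable (impl (impl E (impl C D)) (impl E (impl (impl a C) (impl a D)))) :=
  Provable.taut _ (by
    intro v hn hc; simp only [impl, hn, hc]
    cases v E <;> cases v C <;> cases v D <;> cases v a <;> rfl)

/-- `⊢ (A→B) → (fold l A → fold l B)` -/
theorem imp_lift (A B : F) : ∀ l : List F,
    Provable (impl (impl A B) (impl (l.foldr impl A) (l.foldr impl B)))
  | [] => pid _
  | a :: l => Provable.mp (pLift _ _ _ a) (imp_lift A B l)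

end LFD
namespace LFD

variable {V Pred : Type} [DecidableEq V] {ar : Pred → ℕ}

local notation "F" => Formula V Pred ar

open Formula

/-- Deducibility from a set of premises. -/
def Ded (Γ : Set F) (A : F) : Prop :=
  ∃ l : List F, (∀ ψ ∈ l, ψ ∈ Γ) ∧ Provable (l.foldr impl A)

theorem Ded.mono {Γ Γ' : Set F} (h : Γ ⊆ Γ') {A : F} (d : Ded Γ A) : Ded Γ' A := by
  obtain ⟨l, hl, hp⟩ := d; exact ⟨l, fun ψ hψ => h (hl ψ hψ), hp⟩

theorem ded_of_mem {Γ : Set F} {A : F} (h : A ∈ Γ) : Ded Γ A :=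
  ⟨[A], by simpa using h, pid A⟩

theorem ded_of_prov {Γ : Set F} {A : F} (h : Provable A) : Ded Γ A :=
  ⟨[], by simp, h⟩

theorem Ded.mp {Γ : Set F} {A B : F} (h1 : Ded Γ (impl A B)) (h2 : Ded Γ A) : Ded Γ B := by
  obtain ⟨l1, hl1, hp1⟩ := h1
  obtain ⟨l2, hl2, hp2⟩ := h2
  refine ⟨l1 ++ l2, ?_, ?_⟩
  · intro ψ hψ; rcases List.mem_append.1 hψ with h | h
    · exact hl1 ψ h
    · exact hl2 ψ h
  · rw [List.foldr_append]
    have h3 : Provable (l1.foldr impl (impl (l2.foldr impl A) (l2.foldr impl B))) :=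
      Provable.mp (imp_mono (imp_lift A B l2) l1) hp1
    exact foldr_mp l1 h3 (imp_intro hp2 l1)

/-- Inconsistency: everything is deducible. -/
def Incon (Γ : Set F) : Prop := ∀ A : F, Ded Γ A

def Con (Γ : Set F) : Prop := ¬ Incon Γ

theorem incon_of_ded_neg {Γ : Set F} {A : F} (h1 : Ded Γ A) (h2 : Ded Γ (neg A)) : Incon Γ :=
  fun B => (Ded.mp (ded_of_prov (efq A B)) h1).mp h2

theorem pDup (c f g : F) : Provable (impl (impl (impl c f) g) (impl (impl c (impl c f)) g)) :=
  Provable.taut _ (by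
    intro v hn hc; simp only [impl, hn, hc]
    cases v c <;> cases v f <;> cases v g <;> rfl)

theorem pSwap (c a f g : F) :
    Provable (impl (impl (impl c f) g) (impl (impl c (impl a f)) (impl a g))) :=
  Provable.taut _ (by
    intro v hn hc; simp only [impl, hn, hc]
    cases v c <;> cases v a <;> cases v f <;> cases v g <;> rfl)

/-- Discharging a hypothesis `c` from a list of premises: the two implication forms. -/
theorem dischargeImp (c B : F) : ∀ l : List F, ∃ l' : List F,
    (∀ ψ ∈ l', ψ ∈ l ∧ ψ ≠ c) ∧
    Provable (impl (l.foldr impl B) (l'.foldr impl (impl c B))) ∧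
    Provable (impl (impl c (l.foldr impl B)) (l'.foldr impl (impl c B)))
  | [] => ⟨[], by simp, p1 B c, pid (impl c B)⟩
  | a :: l => by
    obtain ⟨l', hmem, h1, h2⟩ := dischargeImp c B l
    by_cases ha : a = c
    · subst ha
      exact ⟨l', fun ψ hψ => ⟨List.mem_cons_of_mem _ (hmem ψ hψ).1, (hmem ψ hψ).2⟩,
        h2, Provable.mp (pDup _ _ _) h2⟩
    · refine ⟨a :: l', ?_, brule h1 a, Provable.mp (pSwap _ _ _ _) h2⟩
      intro ψ hψ
      rcases List.mem_cons.1 hψ with rfl | hψ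
      · exact ⟨List.mem_cons_self, ha⟩
      · exact ⟨List.mem_cons_of_mem _ (hmem ψ hψ).1, (hmem ψ hψ).2⟩

/-- Deduction theorem (one direction). -/
theorem ded_insert {Γ : Set F} {c B : F} (h : Ded (insert c Γ) B) : Ded Γ (impl c B) := by
  obtain ⟨l, hl, hp⟩ := h
  obtain ⟨l', hmem, h1, _⟩ := dischargeImp c B l
  refine ⟨l', fun ψ hψ => ?_, Provable.mp h1 hp⟩
  rcases hl ψ (hmem ψ hψ).1 with h | h
  · exact absurd h (hmem ψ hψ).2
  · exact h

end LFD
namespace LFD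

variable {V Pred : Type} [DecidableEq V] {ar : Pred → ℕ}

local notation "F" => Formula V Pred ar

open Formula

/-- Maximal consistent set. -/
def MaxCon (Δ : Set F) : Prop := Con Δ ∧ ∀ A : F, A ∈ Δ ∨ neg A ∈ Δ

theorem MaxCon.mem_of_ded {Δ : Set F} (h : MaxCon Δ) {A : F} (d : Ded Δ A) : A ∈ Δ := by
  rcases h.2 A with hA | hA
  · exact hA
  · exact absurd (incon_of_ded_neg d (ded_of_mem hA)) h.1

theorem MaxCon.prov_mem {Δ : Set F} (h : MaxCon Δ) {A : F} (p : Provable A) : A ∈ Δ :=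
  h.mem_of_ded (ded_of_prov p)

theorem MaxCon.mp_mem {Δ : Set F} (h : MaxCon Δ) {A B : F}
    (h1 : impl A B ∈ Δ) (h2 : A ∈ Δ) : B ∈ Δ :=
  h.mem_of_ded ((ded_of_mem h1).mp (ded_of_mem h2))

theorem MaxCon.not_mem_iff {Δ : Set F} (h : MaxCon Δ) {A : F} : A ∉ Δ ↔ neg A ∈ Δ := by
  constructor
  · intro hA; rcases h.2 A with h' | h'
    · exact absurd h' hA
    · exact h'
  · intro hn hA
    exact absurd (incon_of_ded_neg (ded_of_mem hA) (ded_of_mem hn)) h.1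

theorem MaxCon.conj_mem_iff {Δ : Set F} (h : MaxCon Δ) {A B : F} :
    conj A B ∈ Δ ↔ A ∈ Δ ∧ B ∈ Δ := by
  constructor
  · intro hc
    exact ⟨h.mp_mem (h.prov_mem (conj_elim_l A B)) hc,
      h.mp_mem (h.prov_mem (conj_elim_r A B)) hc⟩
  · rintro ⟨hA, hB⟩
    exact h.mp_mem (h.mp_mem (h.prov_mem (conj_intro A B)) hA) hB

theorem chain_finite_sub {c : Set (Set F)} (hchain : IsChain (· ⊆ ·) c)
    (hne : c.Nonempty) : ∀ l : List F, (∀ ψ ∈ l, ψ ∈ ⋃₀ c) → ∃ t ∈ c, ∀ ψ ∈ l, ψ ∈ t := by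
  intro l
  induction l with
  | nil => exact fun _ => ⟨hne.choose, hne.choose_spec, by simp⟩
  | cons a l ih =>
    intro hmem
    obtain ⟨t, ht, hlt⟩ := ih (fun ψ hψ => hmem ψ (List.mem_cons_of_mem a hψ))
    obtain ⟨u, hu, hau⟩ := hmem a List.mem_cons_self
    rcases eq_or_ne t u with rfl | hne'
    · exact ⟨t, ht, by intro ψ hψ; rcases List.mem_cons.1 hψ with rfl | hψ; exacts [hau, hlt ψ hψ]⟩
    rcases hchain ht hu hne' with hsub | hsub
    · exact ⟨u, hu, by intro ψ hψ; rcases List.mem_cons.1 hψ with rfl | hψ; exacts [hau, hsub (hlt ψ hψ)]⟩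
    · exact ⟨t, ht, by intro ψ hψ; rcases List.mem_cons.1 hψ with rfl | hψ; exacts [hsub hau, hlt ψ hψ]⟩

/-- Lindenbaum's lemma. -/
theorem lindenbaum {Γ : Set F} (h : Con Γ) : ∃ Δ : Set F, Γ ⊆ Δ ∧ MaxCon Δ := by
  obtain ⟨A0, hA0⟩ := not_forall.1 h
  obtain ⟨Δ, hΓΔ, hmax⟩ := zorn_subset_nonempty {Γ' : Set F | Con Γ'}
    (fun c hc hchain hne => by
      refine ⟨⋃₀ c, ?_, fun s hs => Set.subset_sUnion_of_mem hs⟩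
      intro hincon
      obtain ⟨l1, hl1, hp1⟩ := hincon A0
      obtain ⟨l2, hl2, hp2⟩ := hincon (neg A0)
      obtain ⟨t, ht, hlt⟩ := chain_finite_sub hchain hne (l1 ++ l2) (by
        intro ψ hψ; rcases List.mem_append.1 hψ with h' | h'
        exacts [hl1 ψ h', hl2 ψ h'])
      have d1 : Ded t A0 := ⟨l1, fun ψ hψ => hlt ψ (List.mem_append_left _ hψ), hp1⟩
      have d2 : Ded t (neg A0) := ⟨l2, fun ψ hψ => hlt ψ (List.mem_append_right _ hψ), hp2⟩
      exact hc ht (incon_of_ded_neg d1 d2)) Γ h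
  refine ⟨Δ, hΓΔ, hmax.1, fun A => ?_⟩
  by_contra hA
  push_neg at hA
  obtain ⟨hA1, hA2⟩ := hA
  -- both insert A Δ and insert (neg A) Δ are inconsistent
  have con1 : ¬ Con (insert A Δ) := fun hcon => hA1 (by
    have := hmax.eq_of_le (y := insert A Δ) hcon (Set.subset_insert _ _)
    rw [this]; exact Set.mem_insert _ _)
  have con2 : ¬ Con (insert (neg A) Δ) := fun hcon => hA2 (by
    have := hmax.eq_of_le (y := insert (neg A) Δ) hcon (Set.subset_insert _ _)
    rw [this]; exact Set.mem_insert _ _)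
  have i1 : Incon (insert A Δ) := not_not.1 con1
  have i2 : Incon (insert (neg A) Δ) := not_not.1 con2
  refine hmax.1 (fun B => ?_)
  have d1 : Ded Δ (impl A B) := ded_insert (i1 B)
  have d2 : Ded Δ (impl (neg A) B) := ded_insert (i2 B)
  exact ((ded_of_prov (caseSplit A B)).mp d1).mp d2

end LFD
namespace LFD

variable {V Pred : Type} [DecidableEq V] {ar : Pred → ℕ}

local notation "F" => Formula V Pred ar

open Formula

theorem foldr_conj_mem {Δ : Set F} (h : MaxCon Δ) {L : Finset V} {θ : F} :
    ∀ l : List V, (∀ x ∈ l, dep L x ∈ Δ) → θ ∈ Δ →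
      (l.map (fun y => dep L y)).foldr conj θ ∈ Δ
  | [], _, hθ => hθ
  | a :: l, hd, hθ => by
    simp only [List.map_cons, List.foldr_cons]
    exact h.conj_mem_iff.2 ⟨hd a List.mem_cons_self,
      foldr_conj_mem h l (fun x hx => hd x (List.mem_cons_of_mem a hx)) hθ⟩

theorem depPrem_mem {Δ : Set F} (h : MaxCon Δ) {L X : Finset V} {θ : F}
    (hd : ∀ x ∈ X, dep L x ∈ Δ) (hθ : θ ∈ Δ) : depPrem L X θ ∈ Δ := by
  rw [depPrem]
  exact foldr_conj_mem h X.toList (fun x hx => hd x (Finset.mem_toList.1 hx)) hθ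

/-- The world type of the canonical model. -/
def Wld (V Pred : Type) [DecidableEq V] (ar : Pred → ℕ) : Type :=
  {Δ : Set (Formula V Pred ar) // MaxCon Δ}

/-- The canonical accessibility relations. -/
def E (L : Finset V) (w w' : Wld V Pred ar) : Prop :=
  ∀ A : F, dd L A ∈ w.1 → A ∈ w'.1

theorem E.refl (L : Finset V) (w : Wld V Pred ar) : E L w w :=
  fun A hA => w.2.mp_mem (w.2.prov_mem (Provable.elim L A)) hA

theorem E.symm {L : Finset V} {w w' : Wld V Pred ar} (h : E L w w') : E L w' w := by
  intro A hA
  by_contra hAw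
  have hnA : neg A ∈ w.1 := w.2.not_mem_iff.1 hAw
  have hB : Provable (impl (neg A) (dd L (neg (dd L A)))) :=
    syl (contrapose (Provable.elim L A)) (Provable.intro L (neg (dd L A)) (by simp [Free]))
  have : neg (dd L A) ∈ w'.1 := h _ (w.2.mp_mem (w.2.prov_mem hB) hnA)
  exact absurd (incon_of_ded_neg (ded_of_mem hA) (ded_of_mem this)) w'.2.1

/-- Transfer of `dep L x` along `E L`. -/
theorem E.dep_step {L : Finset V} {w w' : Wld V Pred ar} (h : E L w w') {x : V}
    (hx : dep L x ∈ w.1) : dep L x ∈ w'.1 :=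
  h _ (w.2.mp_mem (w.2.prov_mem (Provable.intro L (dep L x) (by simp [Free]))) hx)

/-- Key step lemma: a formula `θ` with `⊢ θ → 𝔻_X θ` transfers along an `E L`
step whose source contains `D_L X`. -/
theorem E.step {L X : Finset V} {w w' : Wld V Pred ar} (h : E L w w')
    (hD : ∀ x ∈ X, dep L x ∈ w.1) {θ : F}
    (hI : Provable (impl θ (dd X θ))) (hθ : θ ∈ w.1) : θ ∈ w'.1 := by
  have h1 : dd X θ ∈ w.1 := w.2.mp_mem (w.2.prov_mem hI) hθ
  have h2 : depPrem L X (dd X θ) ∈ w.1 := depPrem_mem w.2 hD h1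
  have h3 : dd L θ ∈ w.1 := w.2.mp_mem (w.2.prov_mem (Provable.transfer L X θ)) h2
  exact h _ h3

/-- `D_L X` also transfers backwards along `E L`. -/
theorem E.depset_symm {L X : Finset V} {w w' : Wld V Pred ar} (h : E L w w')
    (hD : ∀ x ∈ X, dep L x ∈ w.1) : ∀ x ∈ X, dep L x ∈ w'.1 :=
  fun x hx => h.dep_step (hD x hx)

end LFD
namespace LFD

open Formula

variable {V Pred : Type} [DecidableEq V] {ar : Pred → ℕ}

local notation "F" => Formula V Pred ar

/-- Path transitions. -/
abbrev Trn (V Pred : Type) [DecidableEq V] (ar : Pred → ℕ) : Type :=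
  Finset V × Wld V Pred ar

variable (r : Wld V Pred ar)

/-- Endpoint of a path (most recent world). -/
def ep : List (Trn V Pred ar) → Wld V Pred ar
  | [] => r
  | t :: _ => t.2

/-- Well-formed paths: consecutive worlds are related by the canonical relations. -/
def ChainP : List (Trn V Pred ar) → Prop
  | [] => True
  | (L, w) :: l => E L (ep r l) w ∧ ChainP l

open Classical in
/-- The value of variable `y` after a path: the part of the path since `y` was
last reset. -/
noncomputable def strip (y : V) : List (Trn V Pred ar) → List (Trn V Pred ar)
  | [] => []
  | (L, w) :: l => if dep L y ∈ (ep r l).1 then strip y l else (L, w) :: l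

theorem strip_suffix (y : V) : ∀ l : List (Trn V Pred ar), strip r y l <:+ l
  | [] => List.suffix_rfl
  | (L, w) :: l => by
    rw [strip]
    split
    · exact (strip_suffix y l).trans (List.suffix_cons _ _)
    · exact List.suffix_rfl

theorem chainP_suffix : ∀ {l s : List (Trn V Pred ar)}, ChainP r l → s <:+ l → ChainP r s
  | [], s, _, hs => by rw [List.suffix_nil.1 hs]; trivial
  | (L, w) :: l, s, hc, hs => by
    rcases List.suffix_cons_iff.1 hs with rfl | hs
    · exact hc
    · exact chainP_suffix hc.2 hs

theorem not_cons_suffix {t : Trn V Pred ar} {l s : List (Trn V Pred ar)}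
    (h : s <:+ l) : ¬ (t :: l <:+ s) := fun h' => by
  have := (h'.trans h).length_le
  simp at this

/-- unpacking one step of the agreement situation -/
theorem strip_peel {X : Finset V} {L : Finset V} {w : Wld V Pred ar}
    {l s : List (Trn V Pred ar)} (hs : s <:+ l)
    (hstr : ∀ x ∈ X, strip r x ((L, w) :: l) <:+ s) :
    (∀ x ∈ X, dep L x ∈ (ep r l).1) ∧ (∀ x ∈ X, strip r x l <:+ s) := by
  constructor
  · intro x hx
    by_contra hd
    have : strip r x ((L, w) :: l) = (L, w) :: l := by rw [strip, if_neg hd]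
    exact not_cons_suffix hs (this ▸ hstr x hx)
  · intro x hx
    have hd : dep L x ∈ (ep r l).1 := by
      by_contra hd
      have : strip r x ((L, w) :: l) = (L, w) :: l := by rw [strip, if_neg hd]
      exact not_cons_suffix hs (this ▸ hstr x hx)
    have : strip r x ((L, w) :: l) = strip r x l := by rw [strip, if_pos hd]
    exact this ▸ hstr x hx

/-- Propagation of `X`-introspective formulas between a path and a sub-path
below all the `X`-values. -/
theorem propagate {X : Finset V} {θ : F} (hI : Provable (impl θ (dd X θ))) :
    ∀ l s : List (Trn V Pred ar), ChainP r l → s <:+ l →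
      (∀ x ∈ X, strip r x l <:+ s) → (θ ∈ (ep r l).1 ↔ θ ∈ (ep r s).1)
  | [], s, _, hs, _ => by rw [List.suffix_nil.1 hs]
  | (L, w) :: l, s, hc, hs, hstr => by
    rcases List.suffix_cons_iff.1 hs with rfl | hs
    · rfl
    obtain ⟨hdep, hstr'⟩ := strip_peel r hs hstr
    have hE : E L (ep r l) w := hc.1
    have step : θ ∈ w.1 ↔ θ ∈ (ep r l).1 := by
      constructor
      · intro hθ
        exact (hE.symm).step (fun x hx => hE.dep_step (hdep x hx)) hI hθ
      · intro hθ
        exact hE.step hdep hI hθ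
    exact step.trans (propagate hI l s hc.2 hs hstr')

/-- The value of `y` is stable above a sub-path containing `D_X y`, provided the
`X`-values lie below. -/
theorem strip_stable {X : Finset V} {y : V} :
    ∀ l s : List (Trn V Pred ar), ChainP r l → s <:+ l →
      (∀ x ∈ X, strip r x l <:+ s) → dep X y ∈ (ep r s).1 →
      strip r y l = strip r y s
  | [], s, _, hs, _, _ => by rw [List.suffix_nil.1 hs]
  | (L, w) :: l, s, hc, hs, hstr, hdXy => by
    rcases List.suffix_cons_iff.1 hs with rfl | hs
    · rfl
    obtain ⟨hdep, hstr'⟩ := strip_peel r hs hstr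
    have hIntro : Provable (impl (dep X y : F) (dd X (dep X y))) :=
      Provable.intro X (dep X y) (by simp [Free])
    have hXy_l : dep X y ∈ (ep r l).1 :=
      (propagate r hIntro l s hc.2 hs hstr').2 hdXy
    have hLy : dep L y ∈ (ep r l).1 :=
      (ep r l).2.mp_mem ((ep r l).2.prov_mem (Provable.trans L X y))
        (depPrem_mem (ep r l).2 hdep hXy_l)
    rw [strip, if_pos hLy]
    exact strip_stable l s hc.2 hs hstr' hdXy

/-- Existence of a common sub-path below the `X`-values of two pointwise
`X`-agreeing paths. -/
theorem common_sub {X : Finset V} {l1 l2 : List (Trn V Pred ar)}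
    (hag : ∀ x ∈ X, strip r x l1 = strip r x l2) :
    ∃ s, s <:+ l1 ∧ s <:+ l2 ∧ (∀ x ∈ X, strip r x l1 <:+ s) := by
  rcases X.eq_empty_or_nonempty with rfl | hX
  · exact ⟨[], List.nil_suffix, List.nil_suffix, by simp⟩
  obtain ⟨x0, hx0, hmax⟩ := X.exists_max_image (fun x => (strip r x l1).length) hX
  refine ⟨strip r x0 l1, strip_suffix r x0 l1, hag x0 hx0 ▸ strip_suffix r x0 l2, ?_⟩
  intro x hx
  exact List.suffix_of_suffix_length_le (strip_suffix r x l1) (strip_suffix r x0 l1)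
    (hmax x hx)

/-- The merge lemma: `X`-introspective formulas transfer between pointwise
`X`-agreeing paths. -/
theorem merge_mem {X : Finset V} {θ : F} (hI : Provable (impl θ (dd X θ)))
    {l1 l2 : List (Trn V Pred ar)} (h1 : ChainP r l1) (h2 : ChainP r l2)
    (hag : ∀ x ∈ X, strip r x l1 = strip r x l2) (hθ : θ ∈ (ep r l1).1) :
    θ ∈ (ep r l2).1 := by
  obtain ⟨s, hs1, hs2, hstr⟩ := common_sub r hag
  have hstr2 : ∀ x ∈ X, strip r x l2 <:+ s := fun x hx => hag x hx ▸ hstr x hx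
  exact (propagate r hI l2 s h2 hs2 hstr2).2
    ((propagate r hI l1 s h1 hs1 hstr).1 hθ)

/-- The merge lemma for dependence: `D_X y` forces the `y`-values of pointwise
`X`-agreeing paths to coincide. -/
theorem merge_dep {X : Finset V} {y : V}
    {l1 l2 : List (Trn V Pred ar)} (h1 : ChainP r l1) (h2 : ChainP r l2)
    (hag : ∀ x ∈ X, strip r x l1 = strip r x l2)
    (hdXy : dep X y ∈ (ep r l1).1) : strip r y l1 = strip r y l2 := by
  obtain ⟨s, hs1, hs2, hstr⟩ := common_sub r hag
  have hstr2 : ∀ x ∈ X, strip r x l2 <:+ s := fun x hx => hag x hx ▸ hstr x hx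
  have hIntro : Provable (impl (dep X y : F) (dd X (dep X y))) :=
    Provable.intro X (dep X y) (by simp [Free])
  have hs : dep X y ∈ (ep r s).1 := (propagate r hIntro l1 s h1 hs1 hstr).1 hdXy
  rw [strip_stable r l1 s h1 hs1 hstr hs, strip_stable r l2 s h2 hs2 hstr2 hs]

end LFD
namespace LFD

open Formula

variable {V Pred : Type} [DecidableEq V] {ar : Pred → ℕ}

local notation "F" => Formula V Pred ar

theorem dd_peel {w : Wld V Pred ar} {X : Finset V} {B : F} :
    ∀ l : List F, (∀ ψ ∈ l, dd X ψ ∈ w.1) → dd X (l.foldr impl B) ∈ w.1 → dd X B ∈ w.1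
  | [], _, hB => hB
  | a :: l, hl, hB => by
    have h1 : dd X (impl a (l.foldr impl B)) ∈ w.1 := hB
    have h2 : dd X (l.foldr impl B) ∈ w.1 :=
      w.2.mp_mem (w.2.mp_mem (w.2.prov_mem (Provable.distr X a (l.foldr impl B))) h1)
        (hl a List.mem_cons_self)
    exact dd_peel l (fun ψ hψ => hl ψ (List.mem_cons_of_mem a hψ)) h2

/-- Existence lemma. -/
theorem exists_succ {w : Wld V Pred ar} {X : Finset V} {A : F}
    (h : neg (dd X A) ∈ w.1) : ∃ w' : Wld V Pred ar, E X w w' ∧ neg A ∈ w'.1 := by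
  set S : Set F := {ψ | dd X ψ ∈ w.1} ∪ {neg A} with hS
  have hcon : Con S := by
    intro hincon
    obtain ⟨l, hl, hp⟩ := hincon A
    obtain ⟨l', hmem, h1, _⟩ := dischargeImp (neg A) A l
    have hp' : Provable (l'.foldr impl (impl (neg A) A)) := Provable.mp h1 hp
    have hp'' : Provable (l'.foldr impl A) := foldr_of_imp (clavius A) l' hp'
    have hdd : ∀ ψ ∈ l', dd X ψ ∈ w.1 := by
      intro ψ hψ
      rcases hl ψ (hmem ψ hψ).1 with h' | h'
      · exact h'
      · exact absurd h' (hmem ψ hψ).2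
    have : dd X A ∈ w.1 := dd_peel l' hdd (w.2.prov_mem (Provable.nec X hp''))
    exact w.2.1 (incon_of_ded_neg (ded_of_mem this) (ded_of_mem h))
  obtain ⟨Δ, hSΔ, hmc⟩ := lindenbaum hcon
  refine ⟨⟨Δ, hmc⟩, fun ψ hψ => hSΔ (Or.inl hψ), hSΔ (Or.inr rfl)⟩

variable (r : Wld V Pred ar)

/-- The canonical dependence model over root `r`. -/
noncomputable def canonM : DepModel V Pred ar (V × List (Trn V Pred ar)) where
  I P := {f | ∃ l, ChainP r l ∧ ∃ x : Fin (ar P) → V,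
    Formula.atom P x ∈ (ep r l).1 ∧ f = fun i => (x i, strip r (x i) l)}
  A := {s | ∃ l, ChainP r l ∧ s = fun y => (y, strip r y l)}

/-- Truth lemma for the canonical model. -/
theorem truth : ∀ (A : F) (l : List (Trn V Pred ar)), ChainP r l →
    (Sat (canonM r) A (fun y => (y, strip r y l)) ↔ A ∈ (ep r l).1)
  | atom P x, l, hc => by
    constructor
    · rintro ⟨l2, hc2, x2, hat2, heq⟩
      have hx : ∀ i, x i = x2 i ∧ strip r (x i) l = strip r (x2 i) l2 := by
        intro i
        have := congrFun heq i
        exact ⟨congrArg Prod.fst this, by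
          have h2 := congrArg Prod.snd this
          simpa using h2⟩
      have hxx : x = x2 := funext fun i => (hx i).1
      subst hxx
      refine merge_mem r (X := Finset.univ.image x)
        (Provable.intro _ (atom P x) (by simp [Free])) hc2 hc ?_ hat2
      intro v hv
      obtain ⟨i, _, rfl⟩ := Finset.mem_image.1 hv
      exact ((hx i).2).symm
    · intro hat
      exact ⟨l, hc, x, hat, rfl⟩
  | neg A, l, hc => by
    have ih := truth A l hc
    show (¬ Sat (canonM r) A _) ↔ _
    rw [ih, ← (ep r l).2.not_mem_iff]
  | conj A B, l, hc => by
    have ihA := truth A l hc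
    have ihB := truth B l hc
    show (Sat (canonM r) A _ ∧ Sat (canonM r) B _) ↔ _
    rw [ihA, ihB, (ep r l).2.conj_mem_iff]
  | dd X A, l, hc => by
    constructor
    · intro hSat
      by_contra hmem
      have hneg : neg (dd X A) ∈ (ep r l).1 := (ep r l).2.not_mem_iff.1 hmem
      obtain ⟨w', hE, hnA⟩ := exists_succ hneg
      have hc2 : ChainP r ((X, w') :: l) := ⟨hE, hc⟩
      have hagree : agree (↑X) (fun y => (y, strip r y l))
          (fun y => (y, strip r y ((X, w') :: l))) := by
        intro v hv
        have : strip r v ((X, w') :: l) = strip r v l := by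
          rw [strip, if_pos ((ep r l).2.prov_mem (Provable.proj X v hv))]
        simp only [this]
      have hSA := hSat _ ⟨(X, w') :: l, hc2, rfl⟩ hagree
      rw [truth A ((X, w') :: l) hc2] at hSA
      exact absurd (incon_of_ded_neg (ded_of_mem hSA) (ded_of_mem hnA)) w'.2.1
    · intro hmem t ht hagree
      obtain ⟨l2, hc2, rfl⟩ := ht
      have hag : ∀ x ∈ X, strip r x l = strip r x l2 := by
        intro x hx
        have := hagree x (Finset.mem_coe.2 hx)
        simpa using congrArg Prod.snd this
      have : dd X A ∈ (ep r l2).1 :=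
        merge_mem r (Provable.intro X (dd X A) (by simp [Free])) hc hc2 hag hmem
      have hA : A ∈ (ep r l2).1 :=
        (ep r l2).2.mp_mem ((ep r l2).2.prov_mem (Provable.elim X A)) this
      exact (truth A l2 hc2).2 hA
  | dep X y, l, hc => by
    constructor
    · intro hSat
      by_contra hmem
      have hc2 : ChainP r ((X, ep r l) :: l) := ⟨E.refl X (ep r l), hc⟩
      have hagree : agree (↑X) (fun v => (v, strip r v l))
          (fun v => (v, strip r v ((X, ep r l) :: l))) := by
        intro v hv
        have : strip r v ((X, ep r l) :: l) = strip r v l := by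
          rw [strip, if_pos ((ep r l).2.prov_mem (Provable.proj X v hv))]
        simp only [this]
      have := hSat _ ⟨(X, ep r l) :: l, hc2, rfl⟩ hagree
      have hyeq : strip r y l = strip r y ((X, ep r l) :: l) := by
        simpa using congrArg Prod.snd this
      have hy2 : strip r y ((X, ep r l) :: l) = (X, ep r l) :: l := by
        rw [strip, if_neg hmem]
      rw [hy2] at hyeq
      exact not_cons_suffix List.suffix_rfl (hyeq ▸ strip_suffix r y l)
    · intro hmem t ht hagree
      obtain ⟨l2, hc2, rfl⟩ := ht
      have hag : ∀ x ∈ X, strip r x l = strip r x l2 := by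
        intro x hx
        have := hagree x (Finset.mem_coe.2 hx)
        simpa using congrArg Prod.snd this
      have := merge_dep r hc hc2 hag hmem
      simp [this]

end LFD

open LFD

/-- Strong completeness: if every admissible assignment (of every dependence model)
satisfying all formulas of `Ψ` also satisfies `φ`, then `φ` is provable from `Ψ`: there
is a finite list `Ψ₀` of formulas from `Ψ` such that the implication `⋀Ψ₀ → φ` (written
as the iterated implication `ψ₁ → (… → (ψ_k → φ))`) is provable in **LFD**. -/
theorem stmt14 {V Pred : Type} [DecidableEq V] {ar : Pred → ℕ}
    (Ψ : Set (Formula V Pred ar)) (φ : Formula V Pred ar)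
    (h : ∀ (O : Type) (M : DepModel V Pred ar O) (s : V → O), s ∈ M.A →
      (∀ ψ ∈ Ψ, Sat M ψ s) → Sat M φ s) :
    ∃ l : List (Formula V Pred ar), (∀ ψ ∈ l, ψ ∈ Ψ) ∧ Provable (l.foldr impl φ) := by
  by_contra hded
  have hcon : Con (insert (Formula.neg φ) Ψ) := by
    intro hincon
    obtain ⟨l, hl, hp⟩ := ded_insert (hincon φ)
    exact hded ⟨l, hl, foldr_of_imp (clavius φ) l hp⟩
  obtain ⟨Δ, hsub, hmc⟩ := lindenbaum hcon
  set r : Wld V Pred ar := ⟨Δ, hmc⟩ with hr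
  have hroot : ChainP r [] := trivial
  have hs : (fun y => (y, strip r y ([] : List (Trn V Pred ar)))) ∈ (canonM r).A :=
    ⟨[], hroot, rfl⟩
  have hΨ : ∀ ψ ∈ Ψ, Sat (canonM r) ψ (fun y => (y, strip r y [])) := by
    intro ψ hψ
    exact (truth r ψ [] hroot).2 (hsub (Set.mem_insert_of_mem _ hψ))
  have hφ := h _ (canonM r) _ hs hΨ
  rw [truth r φ [] hroot] at hφ
  have hnφ : Formula.neg φ ∈ Δ := hsub (Set.mem_insert _ _)
  exact hmc.1 (incon_of_ded_neg (ded_of_mem hφ) (ded_of_mem hnφ))
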